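/- Let M be a symmetric positive definite n×n matrix, q ∈ ℝⁿ, and let x* be the unique zero of F(x) = (M+I)x + (M−I)|x| + q. Suppose for each p > 0 there is x*(p) with F̃(p, x*(p)) = 0, where F̃ is the smoothed function. Then ‖F(x*(p))‖ ≤ (ln 3 / p)·‖M−I‖·√n; in particular F(x*(p)) → 0 as p → +∞. -/

import Mathlib

open Matrix

lemma stmt_13_key (s : ℝ) : |s| ≤ Real.log (1 + Real.exp s + Real.exp (-s)) ∧
    Real.log (1 + Real.exp s + Real.exp (-s)) ≤ |s| + Real.log 3 := by
  have hpos : (0:ℝ) < 1 + Real.exp s + Real.exp (-s) := by positivity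
  have hmul : Real.exp s * Real.exp (-s) = 1 := by rw [← Real.exp_add]; simp
  constructor
  · rw [Real.le_log_iff_exp_le hpos]
    rcases abs_cases s with ⟨h, _⟩ | ⟨h, _⟩ <;> rw [h] <;>
      nlinarith [Real.exp_pos s, Real.exp_pos (-s)]
  · rw [Real.log_le_iff_le_exp hpos, Real.exp_add, Real.exp_log (by norm_num : (0:ℝ) < 3)]
    rcases abs_cases s with ⟨h, h2⟩ | ⟨h, h2⟩ <;> rw [h]
    · nlinarith [Real.exp_pos s, Real.exp_pos (-s), Real.one_le_exp h2,
        Real.exp_le_exp.2 (neg_le_self h2)]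
    · nlinarith [Real.exp_pos s, Real.exp_pos (-s), Real.one_le_exp (by linarith : (0:ℝ) ≤ -s),
        Real.exp_le_exp.2 (by linarith : s ≤ -s)]

theorem stmt_13 {n : ℕ} (M : Matrix (Fin n) (Fin n) ℝ)
    (hsymm : M.IsSymm) (hpd : M.PosDef) (q : Fin n → ℝ)
    (F : (Fin n → ℝ) → (Fin n → ℝ))
    (hF : F = fun x => (M + 1).mulVec x + (M - 1).mulVec (fun i => |x i|) + q)
    (xstar : Fin n → ℝ) (hx : F xstar = 0) (hxu : ∀ y, F y = 0 → y = xstar)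
    (xs : ℝ → Fin n → ℝ)
    (hxs : ∀ p : ℝ, 0 < p →
      (M + 1).mulVec (xs p) +
        (M - 1).mulVec (fun i => (1 / p) * Real.log (1 + Real.exp (p * xs p i) +
          Real.exp (-(p * xs p i)))) + q = 0) :
    (∀ p : ℝ, 0 < p →
      ‖(WithLp.equiv 2 (Fin n → ℝ)).symm (F (xs p))‖ ≤
        (Real.log 3 / p) * ‖Matrix.toEuclideanCLM (𝕜 := ℝ) (n := Fin n) (M - 1)‖ *
          Real.sqrt n) ∧
    Filter.Tendsto (fun p => (WithLp.equiv 2 (Fin n → ℝ)).symm (F (xs p)))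
      Filter.atTop (nhds 0) := by
  have hlog3 : (0:ℝ) < Real.log 3 := Real.log_pos (by norm_num)
  have main : ∀ p : ℝ, 0 < p →
      ‖(WithLp.equiv 2 (Fin n → ℝ)).symm (F (xs p))‖ ≤
        (Real.log 3 / p) * ‖Matrix.toEuclideanCLM (𝕜 := ℝ) (n := Fin n) (M - 1)‖ *
          Real.sqrt n := by
    intro p hp
    set x := xs p with hxdef
    set g : Fin n → ℝ := fun i => (1 / p) * Real.log (1 + Real.exp (p * x i) +
      Real.exp (-(p * x i))) with hg
    set v : Fin n → ℝ := fun i => |x i| - g i with hv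
    have hFx : F x = (M - 1).mulVec v := by
      have h0 := hxs p hp
      have : F x = F x - ((M + 1).mulVec x + (M - 1).mulVec g + q) := by
        rw [h0]; simp
      rw [this, hF]
      simp only [hv]
      rw [show (fun i => |x i| - g i) = (fun i => |x i|) - g from rfl, Matrix.mulVec_sub]
      abel
    have hvbound : ∀ i, |v i| ≤ Real.log 3 / p := by
      intro i
      have hk := stmt_13_key (p * x i)
      have habs : |p * x i| = p * |x i| := by
        rw [abs_mul, abs_of_pos hp]
      rw [habs] at hk
      set L := Real.log (1 + Real.exp (p * x i) + Real.exp (-(p * x i))) with hL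
      have hgi : g i = 1 / p * L := rfl
      have hgi' : g i = L / p := by rw [hgi]; ring
      have h1 : |x i| ≤ g i := by
        rw [hgi', le_div_iff₀ hp]
        linarith [hk.1]
      have h2 : g i ≤ |x i| + Real.log 3 / p := by
        rw [hgi', div_le_iff₀ hp]
        have heq : (|x i| + Real.log 3 / p) * p = p * |x i| + Real.log 3 := by
          field_simp
        rw [heq]; exact hk.2
      have hvi : v i = |x i| - g i := rfl
      rw [abs_le]
      constructor <;> rw [hvi] <;> linarith
    have hvnorm : ‖(WithLp.equiv 2 (Fin n → ℝ)).symm v‖ ≤ Real.sqrt n * (Real.log 3 / p) := by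
      rw [EuclideanSpace.norm_eq]
      have : ∑ i, ‖(WithLp.equiv 2 (Fin n → ℝ)).symm v i‖ ^ 2 ≤
          ∑ _i : Fin n, (Real.log 3 / p) ^ 2 := by
        apply Finset.sum_le_sum
        intro i _
        have := hvbound i
        have h0 : ‖(WithLp.equiv 2 (Fin n → ℝ)).symm v i‖ = |v i| := rfl
        rw [h0]
        nlinarith [abs_nonneg (v i)]
      calc Real.sqrt (∑ i, ‖(WithLp.equiv 2 (Fin n → ℝ)).symm v i‖ ^ 2)
          ≤ Real.sqrt (∑ _i : Fin n, (Real.log 3 / p) ^ 2) := Real.sqrt_le_sqrt this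
        _ = Real.sqrt (n * (Real.log 3 / p) ^ 2) := by
            rw [Finset.sum_const]; simp [mul_comm]
        _ = Real.sqrt n * (Real.log 3 / p) := by
            rw [Real.sqrt_mul (by positivity), Real.sqrt_sq (by positivity)]
    calc ‖(WithLp.equiv 2 (Fin n → ℝ)).symm (F x)‖
        = ‖Matrix.toEuclideanCLM (𝕜 := ℝ) (n := Fin n) (M - 1)
            ((WithLp.equiv 2 (Fin n → ℝ)).symm v)‖ := by
          rw [hFx]; rfl
      _ ≤ ‖Matrix.toEuclideanCLM (𝕜 := ℝ) (n := Fin n) (M - 1)‖ *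
            ‖(WithLp.equiv 2 (Fin n → ℝ)).symm v‖ :=
          ContinuousLinearMap.le_opNorm _ _
      _ ≤ ‖Matrix.toEuclideanCLM (𝕜 := ℝ) (n := Fin n) (M - 1)‖ *
            (Real.sqrt n * (Real.log 3 / p)) := by
          apply mul_le_mul_of_nonneg_left hvnorm (norm_nonneg _)
      _ = (Real.log 3 / p) * ‖Matrix.toEuclideanCLM (𝕜 := ℝ) (n := Fin n) (M - 1)‖ *
            Real.sqrt n := by ring
  refine ⟨main, ?_⟩
  have hg0 : Filter.Tendsto (fun p : ℝ => (Real.log 3 *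
      ‖Matrix.toEuclideanCLM (𝕜 := ℝ) (n := Fin n) (M - 1)‖ * Real.sqrt n) * p⁻¹)
      Filter.atTop (nhds 0) := by
    have := tendsto_inv_atTop_zero.const_mul (Real.log 3 *
      ‖Matrix.toEuclideanCLM (𝕜 := ℝ) (n := Fin n) (M - 1)‖ * Real.sqrt n)
    rwa [mul_zero] at this
  refine squeeze_zero_norm' ?_ hg0
  filter_upwards [Filter.eventually_gt_atTop (0:ℝ)] with p hp
  calc ‖(WithLp.equiv 2 (Fin n → ℝ)).symm (F (xs p))‖
      ≤ (Real.log 3 / p) * ‖Matrix.toEuclideanCLM (𝕜 := ℝ) (n := Fin n) (M - 1)‖ *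
        Real.sqrt n := main p hp
    _ = (Real.log 3 * ‖Matrix.toEuclideanCLM (𝕜 := ℝ) (n := Fin n) (M - 1)‖ *
        Real.sqrt n) * p⁻¹ := by rw [div_eq_mul_inv]; ring
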